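/- arXiv:2309.07885 — 2 statements merged into one kernel-verified Lean document; each statement's English description precedes it below -/
import Mathlib

section
/- The Tits alternative is stable under extensions: if 1 → K → G → H → 1 is a short exact sequence of groups and both K and H satisfy the Tits alternative, then G satisfies the Tits alternative. -/
/-- A group is virtually solvable if it has a solvable subgroup of finite index. -/
def IsVirtuallySolvable (G : Type*) [Group G] : Prop :=
  ∃ H : Subgroup G, IsSolvable H ∧ H.FiniteIndex

/-- A group satisfies the Tits alternative if every subgroup is either virtually
solvable or contains a nonabelian free group (a copy of the free group of rank 2). -/
def SatisfiesTitsAlternative (G : Type*) [Group G] : Prop :=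
  ∀ H : Subgroup G, IsVirtuallySolvable H ∨
    ∃ φ : FreeGroup (Fin 2) →* H, Function.Injective φ



open Subgroup

section CommF

variable {W : Type*} [Group W] {V : Type*} [Group V]

/-- Commutator operation on subgroups. -/
def commF (W : Type*) [Group W] : Subgroup W → Subgroup W := fun A => ⁅A, A⁆

lemma commF_mono {A B : Subgroup W} (h : A ≤ B) : commF W A ≤ commF W B :=
  Subgroup.commutator_mono h h

lemma commF_le_self (A : Subgroup W) : commF W A ≤ A :=
  Subgroup.commutator_le.mpr fun g hg h hh =>
    mul_mem (mul_mem (mul_mem hg hh) (inv_mem hg)) (inv_mem hh)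

lemma commF_iterate_mono {A B : Subgroup W} (h : A ≤ B) (n : ℕ) :
    (commF W)^[n] A ≤ (commF W)^[n] B := by
  induction n with
  | zero => exact h
  | succ n ih => rw [Function.iterate_succ_apply', Function.iterate_succ_apply']
                 exact commF_mono ih

lemma commF_bot : commF W ⊥ = ⊥ :=
  le_bot_iff.mp (commF_le_self ⊥)

lemma commF_iterate_bot (n : ℕ) : (commF W)^[n] (⊥ : Subgroup W) = ⊥ := by
  induction n with
  | zero => rfl
  | succ n ih => rw [Function.iterate_succ_apply', ih, commF_bot]

lemma commF_iterate_eq_bot_of_le {A : Subgroup W} {n m : ℕ}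
    (h : (commF W)^[n] A = ⊥) (hnm : n ≤ m) : (commF W)^[m] A = ⊥ := by
  obtain ⟨k, rfl⟩ := Nat.exists_eq_add_of_le hnm
  rw [Nat.add_comm, Function.iterate_add_apply, h, commF_iterate_bot]

lemma map_commF_iterate (f : W →* V) (A : Subgroup W) (n : ℕ) :
    ((commF W)^[n] A).map f = (commF V)^[n] (A.map f) := by
  induction n with
  | zero => rfl
  | succ n ih =>
      rw [Function.iterate_succ_apply', Function.iterate_succ_apply', ← ih]
      exact Subgroup.map_commutator _ _ f

lemma map_derivedSeries_subtype (A : Subgroup W) (n : ℕ) :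
    (derivedSeries ↥A n).map A.subtype = (commF W)^[n] A := by
  induction n with
  | zero =>
      rw [derivedSeries_zero, ← MonoidHom.range_eq_map, Subgroup.range_subtype]
      rfl
  | succ n ih =>
      rw [Function.iterate_succ_apply', derivedSeries_succ, ← ih]
      exact Subgroup.map_commutator _ _ _

lemma isSolvable_iff_commF (A : Subgroup W) :
    IsSolvable ↥A ↔ ∃ n, (commF W)^[n] A = ⊥ := by
  constructor
  · rintro ⟨n, hn⟩
    exact ⟨n, by rw [← map_derivedSeries_subtype, hn, Subgroup.map_bot]⟩
  · rintro ⟨n, hn⟩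
    refine ⟨⟨n, ?_⟩⟩
    have := map_derivedSeries_subtype A n
    rw [hn, Subgroup.map_eq_bot_iff, Subgroup.ker_subtype, le_bot_iff] at this
    exact this

end CommF
section CommF2

variable {W : Type*} [Group W]

lemma commF_iterate_card_eq_bot [Finite W] :
    ∀ (c : ℕ) (A : Subgroup W), Nat.card ↥A ≤ c → (∃ n, (commF W)^[n] A = ⊥) →
      (commF W)^[c] A = ⊥ := by
  intro c
  induction c with
  | zero =>
      intro A hc _
      exact absurd (Nat.le_zero.mp hc) Nat.card_pos.ne'
  | succ c ih =>
      intro A hc hn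
      by_cases h : commF W A = A
      · have hfix : ∀ n, (commF W)^[n] A = A := by
          intro n; induction n with
          | zero => rfl
          | succ n ihn => rw [Function.iterate_succ_apply', ihn, h]
        obtain ⟨n, hn⟩ := hn
        rw [hfix n] at hn
        rw [hn, commF_iterate_bot]
      · have hlt : commF W A < A := lt_of_le_of_ne (commF_le_self A) h
        have hss : (commF W A : Set W) ⊂ (A : Set W) := SetLike.coe_ssubset_coe.mpr hlt
        have hcard : Nat.card ↥(commF W A) < Nat.card ↥A := by
          exact Set.ncard_lt_ncard hss (A : Set W).toFinite
        obtain ⟨n, hn⟩ := hn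
        have hn' : (commF W)^[n] (commF W A) = ⊥ := by
          have : (commF W)^[n] (commF W A) ≤ (commF W)^[n] A :=
            commF_iterate_mono (commF_le_self A) n
          rw [hn] at this
          exact le_bot_iff.mp this
        have := ih (commF W A) (by omega) ⟨n, hn'⟩
        rw [Function.iterate_succ_apply, this]

lemma commF_iterate_sup_eq_bot {B₁ B₂ : Subgroup W} [B₁.Normal] {a b : ℕ}
    (h₁ : (commF W)^[a] B₁ = ⊥) (h₂ : (commF W)^[b] B₂ = ⊥) :
    (commF W)^[a + b] (B₁ ⊔ B₂) = ⊥ := by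
  set ρ := QuotientGroup.mk' B₁ with hρ
  have key : (commF W)^[b] (B₁ ⊔ B₂) ≤ B₁ := by
    have hmap : ((commF W)^[b] (B₁ ⊔ B₂)).map ρ = ⊥ := by
      rw [map_commF_iterate, Subgroup.map_sup]
      have hb1 : B₁.map ρ = ⊥ := by rw [Subgroup.map_eq_bot_iff, QuotientGroup.ker_mk']
      rw [hb1, bot_sup_eq, ← map_commF_iterate, h₂, Subgroup.map_bot]
    rwa [Subgroup.map_eq_bot_iff, QuotientGroup.ker_mk'] at hmap
  rw [Function.iterate_add_apply]
  have := commF_iterate_mono key a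
  rw [h₁] at this
  exact le_bot_iff.mp this

lemma commF_iSup_directed {ι : Sort*} [Nonempty ι] {T : ι → Subgroup W}
    (hdir : Directed (· ≤ ·) T) {D : ℕ} (h : ∀ i, (commF W)^[D] (T i) = ⊥) :
    (commF W)^[D] (⨆ i, T i) = ⊥ := by
  have step : ∀ (S : ι → Subgroup W), Directed (· ≤ ·) S →
      commF W (⨆ i, S i) ≤ ⨆ i, commF W (S i) := by
    intro S hS
    refine Subgroup.commutator_le.mpr ?_
    intro g hg h' hh
    obtain ⟨i, hgi⟩ := (Subgroup.mem_iSup_of_directed hS).mp hg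
    obtain ⟨j, hhj⟩ := (Subgroup.mem_iSup_of_directed hS).mp hh
    obtain ⟨k, hik, hjk⟩ := hS i j
    exact le_iSup (fun i => commF W (S i)) k
      (Subgroup.commutator_mem_commutator (hik hgi) (hjk hhj))
  have main : ∀ k : ℕ, (commF W)^[k] (⨆ i, T i) ≤ ⨆ i, (commF W)^[k] (T i) := by
    intro k; induction k with
    | zero => exact le_rfl
    | succ k ih =>
        simp only [Function.iterate_succ_apply']
        calc commF W ((commF W)^[k] (⨆ i, T i))
            ≤ commF W (⨆ i, (commF W)^[k] (T i)) := commF_mono ih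
          _ ≤ ⨆ i, commF W ((commF W)^[k] (T i)) :=
              step _ (hdir.mono_comp _ (fun _ _ hxy => commF_iterate_mono hxy k))
  have := main D
  simp only [h, iSup_bot] at this
  exact le_bot_iff.mp this

end CommF2

section IVS

variable {W : Type*} [Group W]

lemma ivs_of_injective {A B : Type*} [Group A] [Group B] (j : A →* B)
    (hj : Function.Injective j) (h : IsVirtuallySolvable B) : IsVirtuallySolvable A := by
  obtain ⟨S, hS, hfin⟩ := h
  refine ⟨S.comap j, ?_, ?_⟩
  · haveI : Group.IsSolvable ↥S := hS
    have hinj : Function.Injective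
        ((j.comp (S.comap j).subtype).codRestrict S (fun x => x.2)) := by
      intro a b hab
      exact Subtype.ext (hj (congrArg Subtype.val hab))
    exact solvable_of_solvable_injective hinj
  · haveI := hfin
    haveI : (S.subgroupOf j.range).FiniteIndex := inferInstance
    exact ⟨by rw [Subgroup.index_comap]; exact this.index_ne_zero⟩

lemma ivs_of_le_relIndex {L T : Subgroup W} (hTL : T ≤ L) (hsolv : IsSolvable ↥T)
    (hrel : T.relIndex L ≠ 0) : IsVirtuallySolvable ↥L := by
  haveI : Group.IsSolvable ↥T := hsolv
  refine ⟨T.subgroupOf L,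
    solvable_of_solvable_injective (f := (Subgroup.subgroupOfEquivOfLe hTL).toMonoidHom)
      (Subgroup.subgroupOfEquivOfLe hTL).injective, ⟨hrel⟩⟩

lemma ivs_exists_of (L : Subgroup W) (h : IsVirtuallySolvable ↥L) :
    ∃ T : Subgroup W, T ≤ L ∧ IsSolvable ↥T ∧ T.relIndex L ≠ 0 := by
  obtain ⟨S, hS, hfin⟩ := h
  refine ⟨S.map L.subtype, Subgroup.map_subtype_le S, ?_, ?_⟩
  · haveI : Group.IsSolvable ↥S := hS
    exact solvable_of_solvable_injective
      (f := (Subgroup.equivMapOfInjective S L.subtype L.subtype_injective).symm.toMonoidHom)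
      (Subgroup.equivMapOfInjective S L.subtype L.subtype_injective).symm.injective
  · have heq : (S.map L.subtype).relIndex L = S.index := by
      rw [Subgroup.relIndex]
      congr 1
      exact Subgroup.comap_map_eq_self_of_injective L.subtype_injective S
    rw [heq]
    exact hfin.index_ne_zero

lemma ivs_of_finiteIndex_subgroup (A : Subgroup W) [hA : A.FiniteIndex]
    (h : IsVirtuallySolvable ↥A) : IsVirtuallySolvable W := by
  obtain ⟨T, hTA, hsolv, hrel⟩ := ivs_exists_of A h
  refine ⟨T, hsolv, ⟨?_⟩⟩
  intro h0
  have := Subgroup.relIndex_mul_index hTA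
  rw [h0] at this
  rcases Nat.mul_eq_zero.mp this with h' | h'
  · exact hrel h'
  · exact hA.index_ne_zero h'

end IVS

section Extension

/-- Key extension lemma: if `f : X →* Q` with `Q` solvable and `ker f` virtually
solvable, then `X` is virtually solvable. -/
lemma ivs_extension {X Q : Type*} [Group X] [Group Q] (f : X →* Q) [Group.IsSolvable Q]
    (h : IsVirtuallySolvable ↥f.ker) : IsVirtuallySolvable X := by
  classical
  set N : Subgroup X := f.ker with hNdef
  obtain ⟨S, hSsolv, hSfin⟩ := h
  haveI := hSfin
  set S₀ : Subgroup ↥N := S.normalCore with hS0def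
  haveI : S₀.FiniteIndex := inferInstance
  have hS0solv : IsSolvable ↥S₀ := by
    haveI : Group.IsSolvable ↥S := hSsolv
    exact solvable_of_solvable_injective (f := Subgroup.inclusion S.normalCore_le)
      (Subgroup.inclusion_injective _)
  obtain ⟨d, hd⟩ := (isSolvable_iff_commF S₀).mp hS0solv
  set π : ↥N →* ↥N ⧸ S₀ := QuotientGroup.mk' S₀ with hπdef
  haveI : Finite (↥N ⧸ S₀) := inferInstance
  set m := Nat.card (↥N ⧸ S₀) with hmdef
  set e : X →* MulAut ↥N := MulAut.conjNormal with hedef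
  set T : X → Subgroup ↥N := fun x => S₀.map (e x).toMonoidHom with hTdef
  have hTcomp : ∀ x y : X, (T y).map (e x).toMonoidHom = T (x * y) := by
    intro x y
    simp only [hTdef, Subgroup.map_map]
    congr 1
    ext n
    simp only [MonoidHom.comp_apply, MulEquiv.coe_toMonoidHom, map_mul, MulAut.mul_apply]
  have hTbot : ∀ x, (commF ↥N)^[d] (T x) = ⊥ := by
    intro x
    simp only [hTdef]
    rw [← map_commF_iterate, hd, Subgroup.map_bot]
  have hTnormal : ∀ x, (T x).Normal := fun x =>
    Subgroup.Normal.map inferInstance _ (e x).surjective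
  set A : Finset X → Subgroup ↥N := fun F => ⨆ x ∈ F, T x with hAdef
  have hAmono : ∀ {F F' : Finset X}, F ⊆ F' → A F ≤ A F' := by
    intro F F' hFF'
    exact biSup_mono hFF'
  have hAdir : Directed (· ≤ ·) A := fun F F' =>
    ⟨F ∪ F', hAmono Finset.subset_union_left, hAmono Finset.subset_union_right⟩
  have hAQ : ∀ F : Finset X, ∃ n, (commF _)^[n] ((A F).map π) = ⊥ := by
    intro F
    induction F using Finset.induction with
    | empty => exact ⟨0, by simp [hAdef]⟩
    | @insert x F' hx ih =>
        obtain ⟨n, hn⟩ := ih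
        have hins : A (insert x F') = T x ⊔ A F' := by
          simp only [hAdef]
          exact Finset.iSup_insert x F' T
        rw [hins, Subgroup.map_sup]
        haveI : ((T x).map π).Normal :=
          Subgroup.Normal.map (hTnormal x) π (QuotientGroup.mk'_surjective S₀)
        refine ⟨d + n, commF_iterate_sup_eq_bot ?_ hn⟩
        rw [← map_commF_iterate, hTbot, Subgroup.map_bot]
  have hAbound : ∀ F : Finset X, (commF ↥N)^[d + m] (A F) = ⊥ := by
    intro F
    obtain ⟨n, hn⟩ := hAQ F
    have hcard : Nat.card ↥((A F).map π) ≤ m :=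
      Nat.card_le_card_of_injective _ Subtype.val_injective
    have hQ : (commF _)^[m] ((A F).map π) = ⊥ :=
      commF_iterate_card_eq_bot m _ hcard ⟨n, hn⟩
    have hle : (commF ↥N)^[m] (A F) ≤ S₀ := by
      rw [← map_commF_iterate, Subgroup.map_eq_bot_iff, QuotientGroup.ker_mk'] at hQ
      exact hQ
    have hfin : (commF ↥N)^[d] ((commF ↥N)^[m] (A F)) ≤ ⊥ := by
      have := commF_iterate_mono hle d
      rwa [hd] at this
    rw [Function.iterate_add_apply]
    exact le_bot_iff.mp hfin
  set R' : Subgroup ↥N := ⨆ F : Finset X, A F with hR'def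
  have hR'bot : (commF ↥N)^[d + m] R' = ⊥ := commF_iSup_directed hAdir hAbound
  have hTleR' : ∀ x, T x ≤ R' := by
    intro x
    have h1 : T x ≤ A {x} := by
      simp only [hAdef]
      exact le_of_eq (Finset.iSup_singleton x T).symm
    exact h1.trans (le_iSup A {x})
  have hS0le : S₀ ≤ R' := by
    have hT1 : T 1 = S₀ := by
      simp only [hTdef, map_one]
      ext n
      constructor
      · rintro ⟨k, hk, rfl⟩; exact hk
      · intro hn; exact ⟨n, hn, rfl⟩
    rw [← hT1]
    exact hTleR' 1
  set R : Subgroup X := R'.map N.subtype with hRdef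
  have hRN : R ≤ N := Subgroup.map_subtype_le R'
  have hRsolv : IsSolvable ↥R := by
    refine (isSolvable_iff_commF R).mpr ⟨d + m, ?_⟩
    rw [hRdef, ← map_commF_iterate, hR'bot, Subgroup.map_bot]
  have hmapA : ∀ (x : X) (F : Finset X), (A F).map (e x).toMonoidHom ≤ R' := by
    intro x F
    have : (A F).map (e x).toMonoidHom = ⨆ y ∈ F, (T y).map (e x).toMonoidHom := by
      simp only [hAdef]
      rw [(Subgroup.gc_map_comap (e x).toMonoidHom).l_iSup]
      congr 1
      funext y
      rw [(Subgroup.gc_map_comap (e x).toMonoidHom).l_iSup]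
    rw [this]
    refine iSup_le fun y => iSup_le fun _ => ?_
    rw [hTcomp x y]
    exact hTleR' (x * y)
  haveI hRnormal : R.Normal := by
    constructor
    intro g hg x
    obtain ⟨n, hn, rfl⟩ := hg
    have hx : x * (N.subtype n) * x⁻¹ = ((e x n : ↥N) : X) := by
      simp [hedef]
    rw [hx]
    refine ⟨e x n, ?_, rfl⟩
    obtain ⟨F, hF⟩ := (Subgroup.mem_iSup_of_directed hAdir).mp hn
    exact hmapA x F ⟨n, hF, rfl⟩
  have hRrel : R.relIndex N ≠ 0 := by
    have h1 : R.subgroupOf N = R' :=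
      Subgroup.comap_map_eq_self_of_injective N.subtype_injective R'
    have h2 : R'.index ∣ S₀.index := Subgroup.index_dvd_of_le hS0le
    rw [Subgroup.relIndex, h1]
    intro h0
    rw [h0] at h2
    exact ‹S₀.FiniteIndex›.index_ne_zero (Nat.eq_zero_of_zero_dvd h2)
  -- Part 2: quotient by R and centralizer argument
  set q : X →* X ⧸ R := QuotientGroup.mk' R with hqdef
  have hkerq : q.ker = R := QuotientGroup.ker_mk' R
  set Nq : Subgroup (X ⧸ R) := N.map q with hNqdef
  haveI : Nq.Normal := Subgroup.Normal.map inferInstance q (QuotientGroup.mk'_surjective R)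
  haveI hNqfin : Finite ↥Nq := by
    haveI : (R.subgroupOf N).FiniteIndex := ⟨by rwa [← Subgroup.relIndex]⟩
    haveI : Finite (↥N ⧸ R.subgroupOf N) := inferInstance
    set g0 : ↥N →* ↥Nq := (q.comp N.subtype).codRestrict Nq (fun n => ⟨n, n.2, rfl⟩) with hg0def
    have hg0 : Function.Surjective g0 := by
      rintro ⟨y, x, hx, rfl⟩
      exact ⟨⟨x, hx⟩, rfl⟩
    have hcond : ∀ n : ↥N, n ∈ R.subgroupOf N → g0 n = 1 := by
      intro n hn
      refine Subtype.ext ?_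
      show q (n : X) = 1
      rw [hqdef]
      exact (QuotientGroup.eq_one_iff _).mpr hn
    exact Finite.of_surjective (QuotientGroup.lift (R.subgroupOf N) g0 hcond)
      (fun y => by obtain ⟨n, hn⟩ := hg0 y; exact ⟨QuotientGroup.mk n, hn⟩)
  set f2 : X ⧸ R →* Q := QuotientGroup.lift R f
    (fun x hx => MonoidHom.mem_ker.mp (hRN hx)) with hf2def
  have hf2q : ∀ x : X, f2 (q x) = f x := fun x => rfl
  have hker2 : f2.ker = Nq := by
    ext y
    obtain ⟨x, rfl⟩ := QuotientGroup.mk'_surjective R y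
    constructor
    · intro hy
      have : f x = 1 := hy
      exact ⟨x, this, rfl⟩
    · rintro ⟨z, hz, hzx⟩
      show f2 (q x) = 1
      rw [← hzx]
      exact hz
  set C : Subgroup (X ⧸ R) := Subgroup.centralizer (Nq : Set (X ⧸ R)) with hCdef
  have hCfin : C.FiniteIndex := by
    haveI : Finite (MulAut ↥Nq) :=
      Finite.of_injective (fun e => (e : ↥Nq → ↥Nq)) DFunLike.coe_injective
    set ρ : (X ⧸ R) →* MulAut ↥Nq := MulAut.conjNormal with hρdef
    have hkerle : ρ.ker ≤ C := by
      intro x hx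
      rw [hCdef, Subgroup.mem_centralizer_iff]
      intro n hn
      have h1 : ((ρ x) ⟨n, hn⟩ : X ⧸ R) = n := by
        rw [MonoidHom.mem_ker.mp hx]; rfl
      have h2 : x * n * x⁻¹ = n := by
        simpa [hρdef] using h1
      conv_lhs => rw [← h2]
      group
    have hkerfin : ρ.ker.index ≠ 0 := by
      rw [Subgroup.index_ker]
      exact Nat.card_ne_zero.mpr ⟨⟨1, ⟨1, map_one ρ⟩⟩, inferInstance⟩
    refine ⟨fun h0 => hkerfin ?_⟩
    have := Subgroup.index_dvd_of_le hkerle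
    rwa [h0, Nat.zero_dvd] at this
  have hCsolv : IsSolvable ↥C := by
    set gC : ↥C →* Q := f2.comp C.subtype with hgCdef
    haveI : Group.IsSolvable ↥gC.ker := by
      refine isSolvable_of_comm fun a b => ?_
      apply Subtype.ext
      apply Subtype.ext
      have hbN : ((b : ↥C) : X ⧸ R) ∈ Nq := by
        rw [← hker2]
        exact b.2
      have haC : ((a : ↥C) : X ⧸ R) ∈ Subgroup.centralizer (Nq : Set (X ⧸ R)) := (a : ↥C).2
      exact (Subgroup.mem_centralizer_iff.mp haC _ hbN).symm
    exact solvable_of_ker_le_range gC.ker.subtype gC (le_of_eq (Subgroup.range_subtype _).symm)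
  refine ⟨C.comap q, ?_, ?_⟩
  · set P : Subgroup X := C.comap q with hPdef
    set gP : ↥P →* ↥C := (q.comp P.subtype).codRestrict C (fun p => p.2) with hgPdef
    have hkerP : ∀ p : ↥P, p ∈ gP.ker ↔ (p : X) ∈ R := by
      intro p
      rw [MonoidHom.mem_ker]
      constructor
      · intro hp
        have h1 : q (p : X) = 1 := congrArg Subtype.val hp
        rw [← hkerq]
        exact h1
      · intro hp
        refine Subtype.ext ?_
        show q (p : X) = 1
        rw [← MonoidHom.mem_ker, hkerq]
        exact hp
    haveI : Group.IsSolvable ↥gP.ker := by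
      haveI : Group.IsSolvable ↥R := hRsolv
      set u : ↥gP.ker →* ↥R :=
        (P.subtype.comp gP.ker.subtype).codRestrict R (fun p => (hkerP p.1).mp p.2) with hudef
      have hu : Function.Injective u := by
        intro a b hab
        have h1 : ((u a : ↥R) : X) = ((u b : ↥R) : X) :=
          congrArg (fun z : ↥R => (z : X)) hab
        exact Subtype.ext (Subtype.ext h1)
      exact solvable_of_solvable_injective (f := u) hu
    haveI : Group.IsSolvable ↥C := hCsolv
    exact solvable_of_ker_le_range gP.ker.subtype gP (le_of_eq (Subgroup.range_subtype _).symm)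
  · constructor
    rw [Subgroup.index_comap, MonoidHom.range_eq_top_of_surjective q (QuotientGroup.mk'_surjective R),
      Subgroup.relIndex_top_right]
    exact hCfin.index_ne_zero

end Extension

/-- The Tits alternative is stable under extensions: if `1 → K → G → H → 1` is a short
exact sequence of groups and both `K` and `H` satisfy the Tits alternative, then so
does `G`. -/
theorem titsAlternative_of_extension
    {K G H : Type*} [Group K] [Group G] [Group H]
    (φ : K →* G) (ψ : G →* H) (hφ : Function.Injective φ)
    (hψ : Function.Surjective ψ) (hexact : φ.range = ψ.ker)
    (hK : SatisfiesTitsAlternative K) (hH : SatisfiesTitsAlternative H) :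
    SatisfiesTitsAlternative G := by
  intro L
  set θ : ↥L →* H := ψ.comp L.subtype with hθdef
  set NG : Subgroup G := L ⊓ ψ.ker with hNGdef
  rcases hK (NG.comap φ) with hKivs | ⟨ι, hι⟩
  swap
  · right
    set j : ↥(NG.comap φ) →* ↥L := (φ.comp (NG.comap φ).subtype).codRestrict L
      (fun x => (Subgroup.mem_inf.mp x.2).1) with hjdef
    have hjinj : Function.Injective j := fun a b hab =>
      Subtype.ext (hφ (congrArg (fun z : ↥L => (z : G)) hab))
    refine ⟨j.comp ι, ?_⟩
    rw [MonoidHom.coe_comp]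
    exact hjinj.comp hι
  have hNGivs : IsVirtuallySolvable ↥NG := by
    set u : ↥(NG.comap φ) →* ↥NG :=
      (φ.comp (NG.comap φ).subtype).codRestrict NG (fun x => x.2) with hudef
    have huinj : Function.Injective u := fun a b hab =>
      Subtype.ext (hφ (congrArg (fun z : ↥NG => (z : G)) hab))
    have husurj : Function.Surjective u := by
      rintro ⟨g, hg⟩
      have hgr : g ∈ φ.range := by
        rw [hexact]
        exact (Subgroup.mem_inf.mp hg).2
      obtain ⟨k, hk⟩ := hgr
      refine ⟨⟨k, ?_⟩, Subtype.ext hk⟩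
      show φ k ∈ NG
      rw [hk]
      exact hg
    exact ivs_of_injective (MulEquiv.ofBijective u ⟨huinj, husurj⟩).symm.toMonoidHom
      (MulEquiv.injective _) hKivs
  rcases hH θ.range with hHivs | ⟨χ, hχ⟩
  swap
  · right
    have hsel : ∀ i : Fin 2, ∃ l : ↥L, θ l = (χ (FreeGroup.of i) : H) :=
      fun i => (χ (FreeGroup.of i)).2
    choose l hl using hsel
    set lift : FreeGroup (Fin 2) →* ↥L := FreeGroup.lift l with hliftdef
    have hcomp : θ.comp lift = θ.range.subtype.comp χ := by
      apply FreeGroup.ext_hom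
      intro i
      simp only [MonoidHom.coe_comp, Function.comp_apply, hliftdef, FreeGroup.lift_apply_of]
      exact hl i
    refine ⟨lift, ?_⟩
    have hinj2 : Function.Injective (⇑θ ∘ ⇑lift) := by
      rw [← MonoidHom.coe_comp, hcomp, MonoidHom.coe_comp]
      exact (Subgroup.subtype_injective _).comp hχ
    exact Function.Injective.of_comp hinj2
  left
  obtain ⟨SH, hSHsolv, hSHfin⟩ := hHivs
  set L₀ : Subgroup ↥L := (SH.map θ.range.subtype).comap θ with hL0def
  haveI hL0fin : L₀.FiniteIndex := by
    constructor
    rw [hL0def, Subgroup.index_comap]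
    have heq : (SH.map θ.range.subtype).relIndex θ.range = SH.index := by
      rw [Subgroup.relIndex]
      congr 1
      exact Subgroup.comap_map_eq_self_of_injective (Subgroup.subtype_injective _) SH
    rw [heq]
    exact hSHfin.index_ne_zero
  refine ivs_of_finiteIndex_subgroup L₀ ?_
  haveI hWsolv : Group.IsSolvable ↥(SH.map θ.range.subtype) := by
    haveI : Group.IsSolvable ↥SH := hSHsolv
    exact solvable_of_solvable_injective
      (f := (Subgroup.equivMapOfInjective SH θ.range.subtype
        (Subgroup.subtype_injective _)).symm.toMonoidHom)
      (MulEquiv.injective _)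
  set f0 : ↥L₀ →* ↥(SH.map θ.range.subtype) :=
    (θ.comp L₀.subtype).codRestrict _ (fun x => x.2) with hf0def
  refine ivs_extension f0 ?_
  have hmem : ∀ x : ↥f0.ker, ((((x : ↥L₀) : ↥L) : G)) ∈ NG := by
    intro x
    refine Subgroup.mem_inf.mpr ⟨((x : ↥L₀) : ↥L).2, ?_⟩
    have h1 : θ ((x : ↥L₀) : ↥L) = 1 := congrArg (fun z : ↥(SH.map θ.range.subtype) => (z : H)) x.2
    exact h1
  set v : ↥f0.ker →* ↥NG :=
    ((L.subtype.comp L₀.subtype).comp f0.ker.subtype).codRestrict NG hmem with hvdef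
  have hvinj : Function.Injective v := by
    intro a b hab
    have h1 : ((((a : ↥L₀) : ↥L) : G)) = ((((b : ↥L₀) : ↥L) : G)) :=
      congrArg (fun z : ↥NG => (z : G)) hab
    exact Subtype.ext (Subtype.ext (Subtype.ext h1))
  exact ivs_of_injective v hvinj hNGivs
end

section
/- The group R of locally constant functions from a topological space E to a free group F_n satisfies the strong Tits alternative: every subgroup of R is either abelian or contains a nonabelian free group. -/
/-- In a free group over a subsingleton type, any two elements commute. -/
lemma freeGroup_commute_of_subsingleton {ι : Type*} [Subsingleton ι]
    (u v : FreeGroup ι) : Commute u v := by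
  induction u using FreeGroup.induction_on with
  | C1 => exact Commute.one_left v
  | of x =>
    induction v using FreeGroup.induction_on with
    | C1 => exact Commute.one_right _
    | of y => rw [Subsingleton.elim x y]
    | inv_of y h => exact h.inv_right
    | mul y z hy hz => exact hy.mul_right hz
  | inv_of x h => exact h.inv_left
  | mul x y hx hy => exact hx.mul_left hy

/-- `FreeGroup.map` of an injective map is injective. -/
lemma freeGroup_map_injective {α β : Type*} {g : α → β} (hg : Function.Injective g)
    [Nonempty α] : Function.Injective (FreeGroup.map g) := by
  classical
  have hinv : Function.LeftInverse (Function.invFun g) g := Function.leftInverse_invFun hg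
  intro w₁ w₂ h
  have h2 := congrArg (FreeGroup.map (Function.invFun g)) h
  simpa [FreeGroup.map.comp, hinv.comp_eq_id, FreeGroup.map.id] using h2

/-- The group of locally constant functions from a topological space `E` to a free group
`F_n` satisfies the strong Tits alternative: every subgroup is either abelian or
contains a nonabelian free group. -/
theorem locallyConstant_strong_tits_alternative
    {E : Type*} [TopologicalSpace E] (n : ℕ)
    (H : Subgroup (LocallyConstant E (FreeGroup (Fin n)))) :
    (∀ a ∈ H, ∀ b ∈ H, a * b = b * a) ∨
      ∃ φ : FreeGroup (Fin 2) →* H, Function.Injective φ := by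
  classical
  by_cases hcomm : ∀ a ∈ H, ∀ b ∈ H, a * b = b * a
  · exact Or.inl hcomm
  right
  push_neg at hcomm
  obtain ⟨a, ha, b, hb, hab⟩ := hcomm
  -- a point where the non-commutation is witnessed
  have hne : ∃ e : E, (a * b) e ≠ (b * a) e := by
    by_contra h
    push_neg at h
    exact hab (DFunLike.ext _ _ h)
  obtain ⟨e, he⟩ := hne
  let ev : LocallyConstant E (FreeGroup (Fin n)) →* FreeGroup (Fin n) := LocallyConstant.evalMonoidHom e
  let S : Subgroup (LocallyConstant E (FreeGroup (Fin n))) := Subgroup.closure {a, b}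
  have hSH : S ≤ H := (Subgroup.closure_le H).2 (by
    rintro x hx
    simp only [Set.mem_insert_iff, Set.mem_singleton_iff] at hx
    rcases hx with rfl | rfl
    · exact ha
    · exact hb)
  have haS : a ∈ S := Subgroup.subset_closure (Set.mem_insert _ _)
  have hbS : b ∈ S := Subgroup.subset_closure (Set.mem_insert_of_mem _ rfl)
  let K : Subgroup (FreeGroup (Fin n)) := S.map ev
  let x' : K := ⟨ev a, ⟨a, haS, rfl⟩⟩
  let y' : K := ⟨ev b, ⟨b, hbS, rfl⟩⟩
  have hxy : ¬ Commute x' y' := by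
    intro h
    apply he
    have h2 := congrArg Subtype.val h
    simpa [x', y', ev, LocallyConstant.evalMonoidHom] using h2
  -- K is a free group by Nielsen–Schreier
  let B := IsFreeGroup.basis K
  -- the basis index type is not a subsingleton
  have hnt : Nontrivial (IsFreeGroup.Generators K) := by
    rw [← not_subsingleton_iff_nontrivial]
    intro hsub
    apply hxy
    have := freeGroup_commute_of_subsingleton (B.repr x') (B.repr y')
    have h2 := congrArg B.repr.symm this
    simpa [Commute, SemiconjBy] using h2
  obtain ⟨i₀, i₁, hii⟩ := hnt
  -- preimages of the two basis elements in S
  obtain ⟨a', ha'S, ha'⟩ := (B i₀).2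
  obtain ⟨b', hb'S, hb'⟩ := (B i₁).2
  let g : Fin 2 → IsFreeGroup.Generators K := ![i₀, i₁]
  have hg : Function.Injective g := by
    intro s t hst
    fin_cases s <;> fin_cases t <;> simp_all [g]
  let ψ : FreeGroup (Fin 2) →* K := B.repr.symm.toMonoidHom.comp (FreeGroup.map g)
  have hψ : Function.Injective ψ :=
    B.repr.symm.injective.comp (freeGroup_map_injective hg)
  -- the homomorphism into H
  let φ : FreeGroup (Fin 2) →* H :=
    FreeGroup.lift ![(⟨a', hSH ha'S⟩ : H), ⟨b', hSH hb'S⟩]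
  refine ⟨φ, ?_⟩
  let inc : H →* FreeGroup (Fin n) := ev.comp H.subtype
  have hB : ∀ i, (B i : FreeGroup (Fin n)) = (B.repr.symm (FreeGroup.of i) : FreeGroup (Fin n)) :=
    fun i => rfl
  have key : inc.comp φ = K.subtype.comp ψ := by
    apply FreeGroup.ext_hom
    intro t
    simp only [inc, φ, ψ, MonoidHom.comp_apply, FreeGroup.lift_apply_of, FreeGroup.map.of]
    fin_cases t
    · simpa [g, ← hB] using ha'
    · simpa [g, ← hB] using hb'
  intro w₁ w₂ hw
  apply hψ
  apply K.subtype_injective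
  have := congrArg inc hw
  calc K.subtype (ψ w₁) = (K.subtype.comp ψ) w₁ := rfl
    _ = (inc.comp φ) w₁ := by rw [key]
    _ = (inc.comp φ) w₂ := by simpa using this
    _ = (K.subtype.comp ψ) w₂ := by rw [key]
    _ = K.subtype (ψ w₂) := rfl
end
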